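/- Let k be a field and R = k[x,y]. Fix integers 0 = a_0 < a_1 < ⋯ < a_r = d (r ≥ 1), set b_i = d − a_i, let I = ⟨x^{a_0}y^{b_0}, …, x^{a_r}y^{b_r}⟩ ⊆ R, let S = ⟨a_0, …, a_r⟩ and T = ⟨b_0, …, b_r⟩ be the numerical semigroups generated by the exponents, and define the ideals I_S = ⟨x^s y^{d−s} : s ∈ S, s ≤ d⟩ and I_T = ⟨x^{d−t} y^t : t ∈ T, t ≤ d⟩. Then there exists an integer L such that for every l ≥ L there exists an ideal J of R with I^l = (y^{d(l−1)})·I_S + (x^{d(l−1)})·I_T + (x^d y^d)·J, where (m)·I' denotes the product of the principal ideal generated by the monomial m with the ideal I'. -/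

import Mathlib

open MvPolynomial Pointwise

/-- Any element of the closure can be written as an ℕ-combination. -/
lemma exists_comb {m : ℕ} (g : Fin m → ℕ) {t : ℕ}
    (ht : t ∈ AddSubmonoid.closure (Set.range g)) :
    ∃ c : Fin m → ℕ, ∑ i, c i * g i = t := by
  induction ht using AddSubmonoid.closure_induction with
  | mem x hx =>
    obtain ⟨i, rfl⟩ := hx
    refine ⟨Pi.single i 1, ?_⟩
    have : ∀ j, (Pi.single i 1 : Fin m → ℕ) j * g j = (Pi.single i (g i) : Fin m → ℕ) j := by
      intro j
      by_cases h : j = i <;> simp [h, Pi.single_apply]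
    simp [this]
  | zero => exact ⟨0, by simp⟩
  | add x y hx hy ihx ihy =>
    obtain ⟨c1, h1⟩ := ihx
    obtain ⟨c2, h2⟩ := ihy
    exact ⟨c1 + c2, by simp [add_mul, Finset.sum_add_distrib, h1, h2]⟩

/-- Padding lemma: can use exactly `l` summands if `t ≤ l` and some generator is 0. -/
lemma exists_comb_len {m : ℕ} (g : Fin m → ℕ) (i0 : Fin m) (hi0 : g i0 = 0) {t l : ℕ}
    (ht : t ∈ AddSubmonoid.closure (Set.range g)) (htl : t ≤ l) :
    ∃ c : Fin m → ℕ, ∑ i, c i = l ∧ ∑ i, c i * g i = t := by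
  obtain ⟨c0, hc0⟩ := exists_comb g ht
  set c1 : Fin m → ℕ := fun i => if g i = 0 then 0 else c0 i with hc1
  have hsum : ∑ i, c1 i * g i = t := by
    rw [← hc0]
    apply Finset.sum_congr rfl
    intro i _
    by_cases h : g i = 0 <;> simp [hc1, h]
  have hN : ∑ i, c1 i ≤ t := by
    calc ∑ i, c1 i ≤ ∑ i, c1 i * g i := by
          apply Finset.sum_le_sum
          intro i _
          by_cases h : g i = 0
          · simp [hc1, h]
          · exact Nat.le_mul_of_pos_right _ (Nat.pos_of_ne_zero h)
      _ = t := hsum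
  refine ⟨c1 + Pi.single i0 (l - ∑ i, c1 i), ?_, ?_⟩
  · simp [Finset.sum_add_distrib, Finset.sum_pi_single']
    omega
  · have : ∀ j, (Pi.single i0 (l - ∑ i, c1 i) : Fin m → ℕ) j * g j = 0 := by
      intro j
      by_cases h : j = i0 <;> simp [h, hi0, Pi.single_apply]
    simp [add_mul, Finset.sum_add_distrib, this, hsum]

lemma prod_pow_mem_pow {R : Type*} [CommRing R] {I : Ideal R} {ι : Type*} [Fintype ι]
    (g : ι → R) (hg : ∀ i, g i ∈ I) (c : ι → ℕ) :
    (∏ i, g i ^ c i) ∈ I ^ (∑ i, c i) := by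
  classical
  induction (Finset.univ : Finset ι) using Finset.cons_induction with
  | empty => simp [Ideal.one_eq_top]
  | cons a s ha ih =>
    rw [Finset.prod_cons, Finset.sum_cons, pow_add]
    exact Ideal.mul_mem_mul (Ideal.pow_mem_pow (hg a) _) ih

lemma prod_gen_pow {K : Type*} [Field K] {m : ℕ} (c a b : Fin m → ℕ) :
    (∏ i, ((X 0 : MvPolynomial (Fin 2) K) ^ a i * X 1 ^ b i) ^ c i)
      = X 0 ^ (∑ i, c i * a i) * X 1 ^ (∑ i, c i * b i) := by
  simp_rw [mul_pow, ← pow_mul, Finset.prod_mul_distrib, Finset.prod_pow_eq_pow_sum,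
    mul_comm]

theorem stmt7 {K : Type*} [Field K] {r : ℕ} (hr : 1 ≤ r) (d : ℕ)
    (a b : Fin (r + 1) → ℕ) (ha0 : a 0 = 0) (hmono : StrictMono a)
    (har : a (Fin.last r) = d) (hb : ∀ i, b i = d - a i)
    (I IS IT : Ideal (MvPolynomial (Fin 2) K))
    (hI : I = Ideal.span (Set.range fun i => X 0 ^ a i * X 1 ^ b i))
    (hIS : IS = Ideal.span {m : MvPolynomial (Fin 2) K | ∃ s : ℕ,
        s ∈ AddSubmonoid.closure (Set.range a) ∧ s ≤ d ∧ m = X 0 ^ s * X 1 ^ (d - s)})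
    (hIT : IT = Ideal.span {m : MvPolynomial (Fin 2) K | ∃ t : ℕ,
        t ∈ AddSubmonoid.closure (Set.range b) ∧ t ≤ d ∧ m = X 0 ^ (d - t) * X 1 ^ t}) :
    ∃ L : ℕ, ∀ l : ℕ, L ≤ l → ∃ J : Ideal (MvPolynomial (Fin 2) K),
      I ^ l = Ideal.span {X 1 ^ (d * (l - 1))} * IS
            + Ideal.span {X 0 ^ (d * (l - 1))} * IT
            + Ideal.span {X 0 ^ d * X 1 ^ d} * J := by
  classical
  have haled : ∀ i, a i ≤ d := fun i => by
    rw [← har]; exact hmono.monotone (Fin.le_last i)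
  have hab : ∀ i, a i + b i = d := fun i => by
    have := haled i; rw [hb i]; omega
  have hblast : b (Fin.last r) = 0 := by rw [hb, har]; omega
  refine ⟨d + 1, fun l hl => ?_⟩
  have hl1 : 1 ≤ l := by omega
  have hdl : d * l = d * (l - 1) + d := by
    obtain ⟨k, rfl⟩ : ∃ k, l = k + 1 := ⟨l - 1, by omega⟩
    simp [Nat.mul_add]
  set e := d * (l - 1) with he
  refine ⟨(I ^ l).colon (Ideal.span {(X 0 : MvPolynomial (Fin 2) K) ^ d * X 1 ^ d}), ?_⟩
  have hpow : I ^ l = Ideal.span ((Set.range fun i => (X 0 : MvPolynomial (Fin 2) K) ^ a i * X 1 ^ b i) ^ l) := by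
    rw [hI]; exact Submodule.span_pow _ l
  -- membership of c-monomials in I^l
  have hmemIl : ∀ c : Fin (r + 1) → ℕ, (∑ i, c i) = l →
      (X 0 : MvPolynomial (Fin 2) K) ^ (∑ i, c i * a i) * X 1 ^ (∑ i, c i * b i) ∈ I ^ l := by
    intro c hc
    rw [← prod_gen_pow]
    have := prod_pow_mem_pow (I := I) (fun i => (X 0 : MvPolynomial (Fin 2) K) ^ a i * X 1 ^ b i)
      (fun i => by rw [hI]; exact Ideal.subset_span ⟨i, rfl⟩) c
    rwa [hc] at this
  -- key combination fact
  have hkey : ∀ c : Fin (r + 1) → ℕ, (∑ i, c i) = l →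
      (∑ i, c i * a i) + (∑ i, c i * b i) = d * l := by
    intro c hc
    rw [← Finset.sum_add_distrib]
    calc (∑ i, (c i * a i + c i * b i)) = ∑ i, c i * d := by
          apply Finset.sum_congr rfl
          intro i _
          rw [← Nat.mul_add, hab]
      _ = (∑ i, c i) * d := by rw [Finset.sum_mul]
      _ = d * l := by rw [hc, Nat.mul_comm]
  apply le_antisymm
  · -- I^l ≤ RHS
    rw [hpow]
    apply Ideal.span_le.mpr
    intro m hm
    have hmIl : m ∈ I ^ l := by rw [hpow]; exact Ideal.subset_span hm
    rw [Set.mem_pow] at hm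
    obtain ⟨f, hf⟩ := hm
    set ι : Fin l → Fin (r + 1) := fun j => (f j).2.choose with hι_def
    have hι : ∀ j, (X 0 : MvPolynomial (Fin 2) K) ^ a (ι j) * X 1 ^ b (ι j) = (f j : MvPolynomial (Fin 2) K) :=
      fun j => (f j).2.choose_spec
    have hprod : m = X 0 ^ (∑ j, a (ι j)) * X 1 ^ (∑ j, b (ι j)) := by
      rw [← hf, List.prod_ofFn]
      have : ∀ j ∈ Finset.univ, ((f j : MvPolynomial (Fin 2) K))
          = X 0 ^ a (ι j) * X 1 ^ b (ι j) := fun j _ => (hι j).symm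
      rw [Finset.prod_congr rfl this]
      simp_rw [Finset.prod_mul_distrib, Finset.prod_pow_eq_pow_sum]
    set s := ∑ j, a (ι j) with hs_def
    set B := ∑ j, b (ι j) with hB_def
    have hsB : s + B = d * l := by
      rw [hs_def, hB_def, ← Finset.sum_add_distrib]
      simp [hab, Finset.sum_const, Finset.card_univ, Nat.mul_comm]
    have hs_mem : s ∈ AddSubmonoid.closure (Set.range a) :=
      AddSubmonoid.sum_mem _ (fun j _ => AddSubmonoid.subset_closure ⟨ι j, rfl⟩)
    have hB_mem : B ∈ AddSubmonoid.closure (Set.range b) :=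
      AddSubmonoid.sum_mem _ (fun j _ => AddSubmonoid.subset_closure ⟨ι j, rfl⟩)
    by_cases hs : s ≤ d
    · have hme : m = X 1 ^ e * (X 0 ^ s * X 1 ^ (d - s)) := by
        rw [hprod, show B = e + (d - s) by omega, pow_add]; ring
      refine Ideal.mem_sup_left (Ideal.mem_sup_left ?_)
      rw [hme]
      exact Ideal.mul_mem_mul (Ideal.subset_span rfl)
        (hIS ▸ Ideal.subset_span ⟨s, hs_mem, hs, rfl⟩)
    · by_cases hB : B ≤ d
      · have hme : m = X 0 ^ e * (X 0 ^ (d - B) * X 1 ^ B) := by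
          rw [hprod, show s = e + (d - B) by omega, pow_add]; ring
        refine Ideal.mem_sup_left (Ideal.mem_sup_right ?_)
        rw [hme]
        exact Ideal.mul_mem_mul (Ideal.subset_span rfl)
          (hIT ▸ Ideal.subset_span ⟨B, hB_mem, hB, rfl⟩)
      · obtain ⟨u, hu⟩ : ∃ u, s = d + u := ⟨s - d, by omega⟩
        obtain ⟨v, hv⟩ : ∃ v, B = d + v := ⟨B - d, by omega⟩
        have hme : m = (X 0 ^ d * X 1 ^ d) * (X 0 ^ u * X 1 ^ v) := by
          rw [hprod, hu, hv, pow_add, pow_add]; ring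
        refine Ideal.mem_sup_right ?_
        rw [hme]
        refine Ideal.mul_mem_mul (Ideal.subset_span rfl) ?_
        rw [Ideal.mem_colon_span_singleton]
        have : (X 0 : MvPolynomial (Fin 2) K) ^ u * X 1 ^ v * (X 0 ^ d * X 1 ^ d) = m := by
          rw [hme]; ring
        rw [this]; exact hpow ▸ hmIl
  · -- RHS ≤ I^l
    refine sup_le (sup_le ?_ ?_) ?_
    · -- y^e * IS ≤ I^l
      rw [hIS, Ideal.span_mul_span']
      apply Ideal.span_le.mpr
      rintro x ⟨p, hp, q, ⟨s, hs_mem, hs_le, rfl⟩, rfl⟩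
      rw [Set.mem_singleton_iff.mp hp]
      obtain ⟨c, hcl, hca⟩ := exists_comb_len a 0 ha0 hs_mem (show s ≤ l by omega)
      have hcb := hkey c hcl
      have hme : (X 1 : MvPolynomial (Fin 2) K) ^ e * (X 0 ^ s * X 1 ^ (d - s))
          = X 0 ^ (∑ i, c i * a i) * X 1 ^ (∑ i, c i * b i) := by
        rw [hca, show (∑ i, c i * b i) = e + (d - s) by omega, pow_add]; ring
      simp only [SetLike.mem_coe]
      rw [hme]
      exact hmemIl c hcl
    · -- x^e * IT ≤ I^l
      rw [hIT, Ideal.span_mul_span']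
      apply Ideal.span_le.mpr
      rintro x ⟨p, hp, q, ⟨t, ht_mem, ht_le, rfl⟩, rfl⟩
      rw [Set.mem_singleton_iff.mp hp]
      obtain ⟨c, hcl, hcb⟩ := exists_comb_len b (Fin.last r) hblast ht_mem (show t ≤ l by omega)
      have hca := hkey c hcl
      have hme : (X 0 : MvPolynomial (Fin 2) K) ^ e * (X 0 ^ (d - t) * X 1 ^ t)
          = X 0 ^ (∑ i, c i * a i) * X 1 ^ (∑ i, c i * b i) := by
        rw [hcb, show (∑ i, c i * a i) = e + (d - t) by omega, pow_add]; ring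
      simp only [SetLike.mem_coe]
      rw [hme]
      exact hmemIl c hcl
    · -- x^d y^d * J ≤ I^l
      apply Ideal.mul_le.mpr
      intro p hp q hq
      obtain ⟨u, rfl⟩ := Ideal.mem_span_singleton.mp hp
      have hq' := Ideal.mem_colon_span_singleton.mp hq
      have : (X 0 : MvPolynomial (Fin 2) K) ^ d * X 1 ^ d * u * q
          = u * (q * (X 0 ^ d * X 1 ^ d)) := by ring
      rw [this]
      exact Ideal.mul_mem_left _ _ hq'
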